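/- Let a group N act by simplicial automorphisms on a connected simplicial graph X with minimum displacement at least 8. Then for every vertex x of X, the quotient map π restricts to an isometry from the closed ball B(x,2) of radius 2 centred at x onto the closed ball of radius 2 centred at π(x) in X/N. -/

import Mathlib

variable {V N : Type*} [Group N] [MulAction N V]



private lemma quot_mk_smul (G : SimpleGraph V) (n : N) (v : V) :
    Quotient.mk (MulAction.orbitRel N V) (n • v) = Quotient.mk (MulAction.orbitRel N V) v :=
  Quotient.sound (MulAction.orbitRel_apply.mpr ⟨n, rfl⟩)

private lemma dist_smul_eq (G : SimpleGraph V) (hconn : G.Connected)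
    (hact : ∀ (n : N) (x y : V), G.Adj x y → G.Adj (n • x) (n • y)) (n : N) (a b : V) :
    G.dist (n • a) (n • b) = G.dist a b := by
  have key : ∀ (m : N) (u v : V), G.dist (m • u) (m • v) ≤ G.dist u v := by
    intro m u v
    obtain ⟨w, hw⟩ := (hconn u v).exists_walk_length_eq_dist
    let hm : G →g G := ⟨fun z => m • z, fun h => hact m _ _ h⟩
    calc G.dist (m • u) (m • v) ≤ (w.map hm).length := SimpleGraph.dist_le _
      _ = w.length := w.length_map hm
      _ = G.dist u v := hw
  refine le_antisymm (key n a b) ?_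
  have := key n⁻¹ (n • a) (n • b)
  simpa using this

/-- The quotient of a simplicial graph by a group action: vertices are `N`-orbits,
and two distinct orbits are adjacent iff they admit adjacent representatives. -/
def quotGraph (N : Type*) [Group N] [MulAction N V] (G : SimpleGraph V) :
    SimpleGraph (Quotient (MulAction.orbitRel N V)) where
  Adj a b := a ≠ b ∧ ∃ x y : V,
    Quotient.mk (MulAction.orbitRel N V) x = a ∧
    Quotient.mk (MulAction.orbitRel N V) y = b ∧ G.Adj x y
  symm := by
    constructor
    rintro a b ⟨hne, x, y, hx, hy, hadj⟩
    exact ⟨hne.symm, y, x, hy, hx, hadj.symm⟩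
  loopless := by
    constructor
    rintro a ⟨hne, _⟩
    exact hne rfl


private lemma push_adj (G : SimpleGraph V)
    (hdisp : ∀ n : N, n ≠ 1 → ∀ x : V, 8 ≤ G.dist x (n • x))
    {a b : V} (h : G.Adj a b) :
    (quotGraph N G).Adj (Quotient.mk (MulAction.orbitRel N V) a)
      (Quotient.mk (MulAction.orbitRel N V) b) := by
  refine ⟨?_, a, b, rfl, rfl, h⟩
  intro he
  rw [Quotient.eq] at he
  obtain ⟨n, hn⟩ := MulAction.orbitRel_apply.mp he
  rcases eq_or_ne n 1 with rfl | hne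
  · simp only at hn; rw [one_smul] at hn; exact h.ne hn.symm
  · have h8 := hdisp n hne b
    simp only at hn
    rw [hn] at h8
    have : G.dist b a ≤ 1 := SimpleGraph.dist_le h.symm.toWalk
    omega

private lemma push_walk (G : SimpleGraph V)
    (hdisp : ∀ n : N, n ≠ 1 → ∀ x : V, 8 ≤ G.dist x (n • x))
    {a b : V} (w : G.Walk a b) :
    ∃ w' : (quotGraph N G).Walk (Quotient.mk (MulAction.orbitRel N V) a)
      (Quotient.mk (MulAction.orbitRel N V) b), w'.length = w.length := by
  induction w with
  | nil => exact ⟨.nil, rfl⟩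
  | cons h w ih =>
    obtain ⟨w', hw'⟩ := ih
    exact ⟨.cons (push_adj G hdisp h) w', by simp [hw']⟩

private lemma lift_walk (G : SimpleGraph V)
    (hact : ∀ (n : N) (x y : V), G.Adj x y → G.Adj (n • x) (n • y)) :
    ∀ {c1 c2 : Quotient (MulAction.orbitRel N V)} (w : (quotGraph N G).Walk c1 c2) (a : V),
      Quotient.mk (MulAction.orbitRel N V) a = c1 →
      ∃ b : V, Quotient.mk (MulAction.orbitRel N V) b = c2 ∧
        ∃ w' : G.Walk a b, w'.length = w.length := by
  intro c1 c2 w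
  induction w with
  | nil => exact fun a ha => ⟨a, ha, .nil, rfl⟩
  | cons h w ih =>
    intro a ha
    obtain ⟨hne, u, v, hu, hv, hadj⟩ := h
    have : ∃ n : N, n • a = u := by
      have := (Quotient.eq.mp (hu.trans ha.symm))
      exact MulAction.mem_orbit_iff.mp (MulAction.orbitRel_apply.mp this)
    obtain ⟨n, hn⟩ := this
    have hadj' : G.Adj a (n⁻¹ • v) := by
      have := hact n⁻¹ u v hadj
      rwa [← hn, inv_smul_smul] at this
    obtain ⟨b, hb, w', hl⟩ := ih (n⁻¹ • v) ((quot_mk_smul G n⁻¹ v).trans hv)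
    exact ⟨b, hb, .cons hadj' w', congrArg (· + 1) hl⟩



/-- the quotient map restricts to an isometry from the ball of radius 2
about any vertex `x` onto the ball of radius 2 about its image. -/
theorem quotient_isometry_on_balls (G : SimpleGraph V) (hconn : G.Connected)
    (hact : ∀ (n : N) (x y : V), G.Adj x y → G.Adj (n • x) (n • y))
    (hdisp : ∀ n : N, n ≠ 1 → ∀ x : V, 8 ≤ G.dist x (n • x))
    (x : V) :
    (∀ y z : V, G.dist x y ≤ 2 → G.dist x z ≤ 2 →
      (quotGraph N G).dist (Quotient.mk (MulAction.orbitRel N V) y)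
        (Quotient.mk (MulAction.orbitRel N V) z) = G.dist y z) ∧
    (∀ b : Quotient (MulAction.orbitRel N V),
      (quotGraph N G).dist (Quotient.mk (MulAction.orbitRel N V) x) b ≤ 2 →
      ∃ y : V, G.dist x y ≤ 2 ∧ Quotient.mk (MulAction.orbitRel N V) y = b) := by
  constructor
  · intro y z hy hz
    obtain ⟨w, hw⟩ := (hconn y z).exists_walk_length_eq_dist
    obtain ⟨w', hw'⟩ := push_walk G hdisp w
    have hle : (quotGraph N G).dist (Quotient.mk (MulAction.orbitRel N V) y)
        (Quotient.mk (MulAction.orbitRel N V) z) ≤ G.dist y z := by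
      refine le_trans (SimpleGraph.dist_le w') ?_
      rw [hw', hw]
    obtain ⟨W, hW⟩ := SimpleGraph.Reachable.exists_walk_length_eq_dist ⟨w'⟩
    obtain ⟨z', hz', w2, hl2⟩ := lift_walk G hact W y rfl
    obtain ⟨n, hn⟩ := MulAction.mem_orbit_iff.mp (MulAction.orbitRel_apply.mp
      (Quotient.eq.mp hz'))
    have hdyz' : G.dist y z' ≤ (quotGraph N G).dist (Quotient.mk (MulAction.orbitRel N V) y)
        (Quotient.mk (MulAction.orbitRel N V) z) := by
      rw [← hW, ← hl2]; exact SimpleGraph.dist_le w2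
    rcases eq_or_ne n 1 with rfl | hne
    · rw [one_smul] at hn
      subst hn
      exact le_antisymm hle hdyz'
    · have h8 := hdisp n hne z
      rw [hn] at h8
      have t1 : G.dist z z' ≤ G.dist z y + G.dist y z' := hconn.dist_triangle
      have t2 : G.dist z y ≤ G.dist z x + G.dist x y := hconn.dist_triangle
      have t3 : G.dist y z ≤ G.dist y x + G.dist x z := hconn.dist_triangle
      have c1 : G.dist z x = G.dist x z := SimpleGraph.dist_comm
      have c2 : G.dist y x = G.dist x y := SimpleGraph.dist_comm
      omega
  · intro b hb
    obtain ⟨b0, rfl⟩ := Quotient.exists_rep b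
    obtain ⟨w0⟩ := hconn.preconnected x b0
    obtain ⟨w', _⟩ := push_walk G hdisp w0
    obtain ⟨W, hW⟩ := SimpleGraph.Reachable.exists_walk_length_eq_dist ⟨w'⟩
    obtain ⟨y, hy, w2, hl2⟩ := lift_walk G hact W x rfl
    refine ⟨y, ?_, hy⟩
    have h := SimpleGraph.dist_le w2
    rw [hl2, hW] at h
    exact le_trans h hb
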